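/- Let t ↦ v(t) be a continuous family of real n × n matrices and t ↦ J(t) a C¹ family of real n × n matrices solving the ODE 2·J'(t) = J(t)·v(t) - v(t)·J(t), with initial condition J(0)² = -I. Then J(t)² = -I for all t. -/

import Mathlib

open Matrix Set

attribute [local instance] Matrix.linftyOpNormedAddCommGroup Matrix.linftyOpNormedRing
  Matrix.linftyOpNormedAlgebra

lemma hasDerivAt_of_entries {n : ℕ} {f : ℝ → Matrix (Fin n) (Fin n) ℝ}
    {f' : Matrix (Fin n) (Fin n) ℝ} {t : ℝ}
    (h : ∀ i j, HasDerivAt (fun s => f s i j) (f' i j) t) :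
    HasDerivAt f f' t := by
  have H : HasDerivAt (fun s => ∑ i : Fin n, ∑ j : Fin n,
      Matrix.single i j (f s i j))
      (∑ i : Fin n, ∑ j : Fin n, Matrix.single i j (f' i j)) t := by
    refine HasDerivAt.fun_sum fun i _ => HasDerivAt.fun_sum fun j _ => ?_
    have := (h i j).smul_const (Matrix.single i j (1 : ℝ))
    simpa [Matrix.smul_single, smul_eq_mul] using this
  have e1 : (fun s => ∑ i : Fin n, ∑ j : Fin n, Matrix.single i j (f s i j)) = f := by
    funext s
    exact (Matrix.matrix_eq_sum_single (f s)).symm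
  rw [e1, ← Matrix.matrix_eq_sum_single f'] at H
  exact H


/-- If a `C¹` family of matrices `J` solves the ODE `2J' = Jv - vJ` and
`J(0)² = -1`, then `J(t)² = -1` for all `t`. -/
theorem square_minus_one_preserved
    (n : ℕ) (v J D : ℝ → Matrix (Fin n) (Fin n) ℝ)
    (hv : ∀ i j, Continuous fun t => v t i j)
    (hJ : ∀ i j, ∀ t : ℝ, HasDerivAt (fun s => J s i j) (D t i j) t)
    (hD : ∀ t : ℝ, (2 : ℝ) • D t = J t * v t - v t * J t)
    (h0 : J 0 * J 0 = -1) :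
    ∀ t : ℝ, J t * J t = -1 := by
  -- matrix-valued derivative of J
  have hJ' : ∀ t : ℝ, HasDerivAt J (D t) t := fun t =>
    hasDerivAt_of_entries (fun i j => hJ i j t)
  -- continuity of v as a matrix-valued function
  have hvc : Continuous v := by
    have : Continuous fun t => ∑ i : Fin n, ∑ j : Fin n,
        Matrix.single i j (v t i j) := by
      refine continuous_finset_sum _ fun i _ => continuous_finset_sum _ fun j _ => ?_
      have : Continuous fun t => (v t i j) • Matrix.single i j (1 : ℝ) :=
        (hv i j).smul continuous_const
      simpa [Matrix.smul_single, smul_eq_mul] using this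
    convert this using 1
    funext t
    exact Matrix.matrix_eq_sum_single (v t)
  set K : ℝ → Matrix (Fin n) (Fin n) ℝ := fun t => J t * J t + 1 with hKdef
  have hK' : ∀ t : ℝ, HasDerivAt K (D t * J t + J t * D t) t := fun t =>
    ((hJ' t).mul (hJ' t)).add_const 1
  -- the key algebraic identity
  have key : ∀ t : ℝ, D t * J t + J t * D t
      = (2⁻¹ : ℝ) • (K t * v t - v t * K t) := by
    intro t
    have h2 : (2 : ℝ) • (D t * J t + J t * D t) = K t * v t - v t * K t := by
      have e1 : (2 : ℝ) • (D t * J t + J t * D t)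
          = ((2 : ℝ) • D t) * J t + J t * ((2 : ℝ) • D t) := by
        rw [smul_add, smul_mul_assoc, mul_smul_comm]
      rw [e1, hD t, hKdef]
      noncomm_ring
    calc D t * J t + J t * D t
        = (2⁻¹ : ℝ) • ((2 : ℝ) • (D t * J t + J t * D t)) := by
          rw [smul_smul]; norm_num
      _ = (2⁻¹ : ℝ) • (K t * v t - v t * K t) := by rw [h2]
  intro t₁
  -- set up the interval
  set b : ℝ := |t₁| + 1 with hb
  have hb0 : (0 : ℝ) < b := by positivity
  have ht₁mem : t₁ ∈ Icc (-b) b :=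
    ⟨by have := neg_abs_le t₁; simp only [hb]; linarith,
     by have := le_abs_self t₁; simp only [hb]; linarith⟩
  -- bound on v over the interval
  obtain ⟨C, hC⟩ := (isCompact_Icc (a := -b) (b := b)).exists_bound_of_continuousOn
    (hvc.norm.continuousOn)
  set M : NNReal := Real.toNNReal C with hM
  -- the clamped vector field
  set vc : ℝ → Matrix (Fin n) (Fin n) ℝ := fun t => v (max (-b) (min b t)) with hvc'
  have hvcmem : ∀ t : ℝ, max (-b) (min b t) ∈ Icc (-b) b := by
    intro t
    constructor
    · exact le_max_left _ _
    · exact max_le (by linarith) (min_le_left _ _)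
  have hvcbound : ∀ t : ℝ, ‖vc t‖ ≤ (M : ℝ) := by
    intro t
    have h := hC _ (hvcmem t)
    rw [Real.norm_eq_abs, abs_of_nonneg (norm_nonneg _)] at h
    refine h.trans ?_
    rw [hM, Real.coe_toNNReal']
    exact le_max_left _ _
  -- Lipschitz bound for the full (clamped) vector field
  set w : ℝ → Matrix (Fin n) (Fin n) ℝ → Matrix (Fin n) (Fin n) ℝ :=
    fun t X => (2⁻¹ : ℝ) • (X * vc t - vc t * X) with hw
  have hlip : ∀ t : ℝ, LipschitzOnWith M (w t) univ := by
    intro t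
    apply LipschitzOnWith.of_dist_le_mul
    intro X _ Y _
    rw [dist_eq_norm, dist_eq_norm]
    have e : w t X - w t Y = (2⁻¹ : ℝ) • ((X - Y) * vc t - vc t * (X - Y)) := by
      rw [hw]
      simp only [sub_mul, mul_sub, smul_sub]
      abel
    rw [e, norm_smul]
    have h1 : ‖(X - Y) * vc t - vc t * (X - Y)‖ ≤ 2 * ((M : ℝ) * ‖X - Y‖) := by
      refine (norm_sub_le _ _).trans ?_
      have h2 := norm_mul_le (X - Y) (vc t)
      have h3 := norm_mul_le (vc t) (X - Y)
      have h4 := hvcbound t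
      have h5 : (0:ℝ) ≤ ‖X - Y‖ := norm_nonneg _
      nlinarith [norm_nonneg (vc t)]
    have : ‖(2⁻¹ : ℝ)‖ = 2⁻¹ := by norm_num
    rw [this]
    linarith
  -- apply uniqueness of ODE solutions
  have hEq : Set.EqOn K (fun _ => (0 : Matrix (Fin n) (Fin n) ℝ)) (Icc (-b) b) := by
    apply ODE_solution_unique_of_mem_Icc (v := w) (s := fun _ => univ) (K := M)
      (t₀ := (0 : ℝ)) (fun t _ => hlip t) ⟨by linarith, hb0⟩
    · exact fun t _ => (hK' t).continuousAt.continuousWithinAt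
    · intro t ht
      have hclamp : max (-b) (min b t) = t := by
        rw [min_eq_right ht.2.le, max_eq_right ht.1.le]
      have : w t (K t) = D t * J t + J t * D t := by
        rw [hw]; dsimp only
        rw [hvc']; dsimp only
        rw [hclamp, ← key t]
      rw [this]
      exact hK' t
    · exact fun t _ => mem_univ _
    · exact continuousOn_const
    · intro t ht
      have : w t 0 = 0 := by simp [hw]
      rw [this]
      exact hasDerivAt_const t 0
    · exact fun t _ => mem_univ _
    · show K 0 = 0
      rw [hKdef]
      dsimp only
      rw [h0]
      simp
  have := hEq ht₁mem
  have hKt : J t₁ * J t₁ + 1 = 0 := this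
  linear_combination (norm := (push_cast; abel1)) hKt
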